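/- There is an absolute constant C such that for every n×m right substochastic binary matrix P there exists a weighted digraph H that is a DAG, has nonnegative integer edge weights, has size at most C·(n+m)·(log₂(n+m)+1), and contains n distinguished row vertices r[1],…,r[n] and m distinguished column vertices c[1],…,c[m] (all distinct), such that for every 1 ≤ x ≤ n and 1 ≤ y ≤ m there is exactly one directed path in H from r[x] to c[y], and its weight equals Σ_{i=x}^{n} Σ_{j=y}^{m} P[i,j]. -/

import Mathlib

/-- A weighted digraph: a finite vertex set `V ⊆ ℕ`, an edge set `E ⊆ V × V`,
and an integer weight function on edges. -/
structure WDigraph where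
  V : Finset ℕ
  E : Finset (ℕ × ℕ)
  w : ℕ × ℕ → ℤ
  edge_fst : ∀ e ∈ E, e.1 ∈ V
  edge_snd : ∀ e ∈ E, e.2 ∈ V

/-- The weight of a walk, given as the list of its vertices, under weight
function `w`: the sum of the weights of its consecutive edges. -/
def walkWeight (w : ℕ × ℕ → ℤ) (l : List ℕ) : ℤ :=
  ((l.zip l.tail).map w).sum

/-- A directed walk in `H`: a nonempty list of vertices of `H` in which each
consecutive pair is an edge of `H`. -/
def IsWalk (H : WDigraph) (l : List ℕ) : Prop :=
  l ≠ [] ∧ (∀ v ∈ l, v ∈ H.V) ∧ List.Chain' (fun u v => (u, v) ∈ H.E) l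

/-- A directed walk in `H` from `u` to `v`. -/
def IsWalkFromTo (H : WDigraph) (l : List ℕ) (u v : ℕ) : Prop :=
  IsWalk H l ∧ l.head? = some u ∧ l.getLast? = some v

/-- A directed path in `H` from `u` to `v`: a walk with no repeated vertex. -/
def IsPathFromTo (H : WDigraph) (l : List ℕ) (u v : ℕ) : Prop :=
  IsWalkFromTo H l u v ∧ l.Nodup

/-- `H` is a DAG: it contains no directed cycle, i.e. no closed walk using at
least one edge. -/
def IsDAG (H : WDigraph) : Prop :=
  ¬ ∃ (v : ℕ) (l : List ℕ), 2 ≤ l.length ∧ IsWalkFromTo H l v v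

/-- `d` is the distance from `u` to `v` in `H` under weight function `w`:
some directed path from `u` to `v` attains weight `d`, and every directed path
from `u` to `v` has weight at least `d`. -/
def HasDistW (H : WDigraph) (w : ℕ × ℕ → ℤ) (u v : ℕ) (d : ℤ) : Prop :=
  (∃ l, IsPathFromTo H l u v ∧ walkWeight w l = d) ∧
  ∀ l, IsPathFromTo H l u v → d ≤ walkWeight w l

/-- The size of a weighted digraph: number of vertices plus number of edges. -/
def WDigraph.size (H : WDigraph) : ℕ := H.V.card + H.E.card

/-- An `n × m` binary matrix (1-based indexing) is right substochastic:
every entry is 0 or 1, and every row has at most one nonzero entry. -/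
def RightSubstochastic (n m : ℕ) (P : ℕ → ℕ → ℤ) : Prop :=
  (∀ i j, 1 ≤ i → i ≤ n → 1 ≤ j → j ≤ m → P i j = 0 ∨ P i j = 1) ∧
  (∀ i, 1 ≤ i → i ≤ n → ∀ j j', 1 ≤ j → j ≤ m → 1 ≤ j' → j' ≤ m →
    P i j ≠ 0 → P i j' ≠ 0 → j = j')

namespace Emu

def rv (x : ℕ) : ℕ := 3 * x
def cv (y : ℕ) : ℕ := 3 * y + 1
def tv (d t a : ℕ) : ℕ := 3 * (Nat.pair d (Nat.pair t a)) + 2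

lemma tv_inj {d t a d' t' a' : ℕ} (h : tv d t a = tv d' t' a') :
    d = d' ∧ t = t' ∧ a = a' := by
  have h1 : Nat.pair d (Nat.pair t a) = Nat.pair d' (Nat.pair t' a') := by
    unfold tv at h; omega
  rw [Nat.pair_eq_pair] at h1
  obtain ⟨h2, h3⟩ := h1
  rw [Nat.pair_eq_pair] at h3
  exact ⟨h2, h3.1, h3.2⟩

lemma rv_mod (x : ℕ) : rv x % 3 = 0 := by unfold rv; omega
lemma cv_mod (y : ℕ) : cv y % 3 = 1 := by unfold cv; omega
lemma tv_mod (d t a : ℕ) : tv d t a % 3 = 2 := by unfold tv; omega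

def dOf (u : ℕ) : ℕ := (Nat.unpair (u / 3)).1
def tOf (u : ℕ) : ℕ := (Nat.unpair (Nat.unpair (u / 3)).2).1
def aOf (u : ℕ) : ℕ := (Nat.unpair (Nat.unpair (u / 3)).2).2

lemma tv_div (d t a : ℕ) : tv d t a / 3 = Nat.pair d (Nat.pair t a) := by
  unfold tv; omega

lemma dOf_tv (d t a : ℕ) : dOf (tv d t a) = d := by
  rw [dOf, tv_div, Nat.unpair_pair]

lemma tOf_tv (d t a : ℕ) : tOf (tv d t a) = t := by
  rw [tOf, tv_div, Nat.unpair_pair]; simp [Nat.unpair_pair]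

lemma aOf_tv (d t a : ℕ) : aOf (tv d t a) = a := by
  rw [aOf, tv_div, Nat.unpair_pair]; simp [Nat.unpair_pair]

/-- the weight function (independent of the matrix; reads labels). -/
def wF : ℕ × ℕ → ℤ := fun e =>
  if e.1 % 3 = 2 then
    (if e.2 % 3 = 2 then (if tOf e.2 % 2 = 1 then (aOf e.1 : ℤ) - (aOf e.2 : ℤ) else 0)
     else if e.2 % 3 = 1 then (aOf e.1 : ℤ) else 0)
  else 0

lemma walkWeight_singleton (w : ℕ × ℕ → ℤ) (a : ℕ) : walkWeight w [a] = 0 := by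
  simp [walkWeight]

lemma walkWeight_cons_cons (w : ℕ × ℕ → ℤ) (a b : ℕ) (l : List ℕ) :
    walkWeight w (a::b::l) = w (a,b) + walkWeight w (b::l) := by
  simp [walkWeight]

lemma wF_rv (x u : ℕ) : wF (rv x, u) = 0 := by
  unfold wF
  simp [rv_mod]

lemma wF_tv_tv (d t a d' t' a' : ℕ) :
    wF (tv d t a, tv d' t' a') = if t' % 2 = 1 then (a : ℤ) - a' else 0 := by
  unfold wF
  simp only [tv_mod, tOf_tv, aOf_tv, if_pos rfl]
  norm_num

lemma wF_tv_cv (d t a y : ℕ) : wF (tv d t a, cv y) = (a : ℤ) := by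
  unfold wF
  simp only [tv_mod, aOf_tv, cv_mod]
  norm_num

section Params

variable (n m : ℕ) (P : ℕ → ℕ → ℤ)

/-- column of row i (0 if the row is all-zero). -/
def colF (i : ℕ) : ℕ := ((Finset.Icc 1 m).filter (fun j => P i j ≠ 0)).sum id

def K : ℕ := Nat.clog 2 m

def loI (d t : ℕ) : ℕ := (t-1) * 2^(K m - d) + 1
def hiI (d t : ℕ) : ℕ := t * 2^(K m - d)

def A (d t x : ℕ) : ℕ :=
  ((Finset.Icc x n).filter
    (fun i => loI m d t ≤ colF m P i ∧ colF m P i ≤ hiI m d t)).card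

def tn (y d : ℕ) : ℕ := (y-1)/2^(K m - d) + 1

lemma A_anti {x x' : ℕ} (h : x ≤ x') (d t : ℕ) : A n m P d t x' ≤ A n m P d t x := by
  apply Finset.card_le_card
  apply Finset.filter_subset_filter
  exact Finset.Icc_subset_Icc h le_rfl

lemma A_split {d t x : ℕ} (hd : d < K m) :
    A n m P d t x = A n m P (d+1) (2*t-1) x + A n m P (d+1) (2*t) x := by
  classical
  have he : K m - d = (K m - (d+1)) + 1 := by omega
  have key : ∀ c : ℕ,
      (loI m d t ≤ c ∧ c ≤ hiI m d t) ↔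
      ((loI m (d+1) (2*t-1) ≤ c ∧ c ≤ hiI m (d+1) (2*t-1)) ∨
       (loI m (d+1) (2*t) ≤ c ∧ c ≤ hiI m (d+1) (2*t))) := by
    intro c
    unfold loI hiI
    rw [he, pow_succ]
    set E := 2^(K m - (d+1)) with hE
    have hEpos : 0 < E := pow_pos (by norm_num) _
    rcases t with _ | t'
    · simp
    · simp only [show 2*(t'+1)-1 = 2*t'+1 from by omega,
        show 2*(t'+1) = 2*t'+2 from by omega,
        show t'+1-1 = t' from rfl,
        show 2*t'+1-1 = 2*t' from by omega,
        show 2*t'+2-1 = 2*t'+1 from by omega]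
      have g1 : t' * (E*2) = 2*(t'*E) := by ring
      have g2 : (t'+1) * (E*2) = 2*(t'*E) + 2*E := by ring
      have g3 : (2*t')*E = 2*(t'*E) := by ring
      have g4 : (2*t'+1)*E = 2*(t'*E) + E := by ring
      have g5 : (2*t'+2)*E = 2*(t'*E) + 2*E := by ring
      rw [g1, g2, g3, g4, g5]
      omega
  unfold A
  rw [Finset.filter_congr (fun i _ => by rw [key (colF m P i)])]
  rw [Finset.filter_or]
  rw [Finset.card_union_of_disjoint]
  rw [Finset.disjoint_filter]
  intro i _ h1 h2
  unfold loI hiI at h1 h2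
  omega

lemma A_welldef_aux {d t x x' : ℕ} (hd : d < K m) (hle : x ≤ x')
    (h : A n m P d t x = A n m P d t x') :
    A n m P (d+1) (2*t-1) x = A n m P (d+1) (2*t-1) x' ∧
    A n m P (d+1) (2*t) x = A n m P (d+1) (2*t) x' := by
  have h1 := A_anti n m P hle (d+1) (2*t-1)
  have h2 := A_anti n m P hle (d+1) (2*t)
  have h3 := A_split n m P (t := t) (x := x) hd
  have h4 := A_split n m P (t := t) (x := x') hd
  omega

lemma A_welldef {d t x x' : ℕ} (hd : d < K m)
    (h : A n m P d t x = A n m P d t x') :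
    A n m P (d+1) (2*t-1) x = A n m P (d+1) (2*t-1) x' ∧
    A n m P (d+1) (2*t) x = A n m P (d+1) (2*t) x' := by
  rcases le_total x x' with hle | hle
  · exact A_welldef_aux n m P hd hle h
  · obtain ⟨h1, h2⟩ := A_welldef_aux n m P hd hle h.symm
    exact ⟨h1.symm, h2.symm⟩


def VT : Finset ℕ :=
  (Finset.Icc 0 (K m)).biUnion (fun d =>
    (Finset.Icc 1 (2^d)).biUnion (fun t =>
      (Finset.Icc 1 (n+1)).image (fun x => tv d t (A n m P d t x))))

def Vr : Finset ℕ := (Finset.Icc 1 n).image rv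
def Vc : Finset ℕ := (Finset.Icc 1 m).image cv
def Vall : Finset ℕ := Vr n ∪ Vc m ∪ VT n m P

def idxI : Finset (ℕ × ℕ × ℕ) :=
  ((Finset.range (K m)) ×ˢ (Finset.Icc 1 (2^(K m))) ×ˢ (Finset.Icc 1 (n+1))).filter
    (fun p => p.2.1 ≤ 2^p.1)

def Er : Finset (ℕ × ℕ) := (Finset.Icc 1 n).image (fun x => (rv x, tv 0 1 (A n m P 0 1 x)))
def EL : Finset (ℕ × ℕ) := (idxI n m).image (fun p =>
  (tv p.1 p.2.1 (A n m P p.1 p.2.1 p.2.2), tv (p.1+1) (2*p.2.1-1) (A n m P (p.1+1) (2*p.2.1-1) p.2.2)))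
def ER : Finset (ℕ × ℕ) := (idxI n m).image (fun p =>
  (tv p.1 p.2.1 (A n m P p.1 p.2.1 p.2.2), tv (p.1+1) (2*p.2.1) (A n m P (p.1+1) (2*p.2.1) p.2.2)))
def Elf : Finset (ℕ × ℕ) := ((Finset.Icc 1 m) ×ˢ (Finset.Icc 1 (n+1))).image (fun q =>
  (tv (K m) q.1 (A n m P (K m) q.1 q.2), cv q.1))

def Eall : Finset (ℕ × ℕ) := Er n m P ∪ EL n m P ∪ ER n m P ∪ Elf n m P

lemma mem_VT {d t x : ℕ} (hd : d ≤ K m) (ht1 : 1 ≤ t) (ht2 : t ≤ 2^d)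
    (hx1 : 1 ≤ x) (hx2 : x ≤ n+1) : tv d t (A n m P d t x) ∈ VT n m P := by
  unfold VT
  rw [Finset.mem_biUnion]
  refine ⟨d, by simp [hd], ?_⟩
  rw [Finset.mem_biUnion]
  refine ⟨t, by simp [ht1, ht2], ?_⟩
  rw [Finset.mem_image]
  exact ⟨x, by simp [hx1, hx2], rfl⟩

lemma edge_mem_V : ∀ e ∈ Eall n m P, e.1 ∈ Vall n m P ∧ e.2 ∈ Vall n m P := by
  intro e he
  unfold Eall at he
  have hm2K : m ≤ 2^(K m) := Nat.le_pow_clog (by norm_num) m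
  simp only [Finset.mem_union] at he
  unfold Vall
  rcases he with ((he | he) | he) | he
  · obtain ⟨x, hx, rfl⟩ := Finset.mem_image.mp he
    simp only [Finset.mem_Icc] at hx
    constructor
    · exact Finset.mem_union_left _ (Finset.mem_union_left _
        (Finset.mem_image.mpr ⟨x, by simp [hx.1, hx.2], rfl⟩))
    · exact Finset.mem_union_right _ (mem_VT n m P (by omega) le_rfl (by simp) (by omega) (by omega))
  · obtain ⟨p, hp, rfl⟩ := Finset.mem_image.mp he
    unfold idxI at hp
    simp only [Finset.mem_filter, Finset.mem_product, Finset.mem_range, Finset.mem_Icc] at hp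
    obtain ⟨⟨hd, ⟨ht1, ht2⟩, hx1, hx2⟩, hts⟩ := hp
    constructor
    · exact Finset.mem_union_right _ (mem_VT n m P (by omega) ht1 hts hx1 hx2)
    · refine Finset.mem_union_right _ (mem_VT n m P (by omega) (by omega) ?_ hx1 hx2)
      have : 2^(p.1+1) = 2 * 2^p.1 := by rw [pow_succ]; ring
      omega
  · obtain ⟨p, hp, rfl⟩ := Finset.mem_image.mp he
    unfold idxI at hp
    simp only [Finset.mem_filter, Finset.mem_product, Finset.mem_range, Finset.mem_Icc] at hp
    obtain ⟨⟨hd, ⟨ht1, ht2⟩, hx1, hx2⟩, hts⟩ := hp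
    constructor
    · exact Finset.mem_union_right _ (mem_VT n m P (by omega) ht1 hts hx1 hx2)
    · refine Finset.mem_union_right _ (mem_VT n m P (by omega) (by omega) ?_ hx1 hx2)
      have : 2^(p.1+1) = 2 * 2^p.1 := by rw [pow_succ]; ring
      omega
  · obtain ⟨q, hq, rfl⟩ := Finset.mem_image.mp he
    simp only [Finset.mem_product, Finset.mem_Icc] at hq
    obtain ⟨⟨ht1, ht2⟩, hx1, hx2⟩ := hq
    constructor
    · exact Finset.mem_union_right _ (mem_VT n m P le_rfl ht1 (by omega) hx1 hx2)
    · exact Finset.mem_union_left _ (Finset.mem_union_right _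
        (Finset.mem_image.mpr ⟨q.1, by simp [ht1, ht2], rfl⟩))

def Hgr : WDigraph :=
  ⟨Vall n m P, Eall n m P, wF,
   fun e he => (edge_mem_V n m P e he).1,
   fun e he => (edge_mem_V n m P e he).2⟩

/-- inversion: edges out of a row vertex. -/
lemma edge_out_rv {x : ℕ} {u : ℕ} (h : (rv x, u) ∈ Eall n m P) :
    1 ≤ x ∧ x ≤ n ∧ u = tv 0 1 (A n m P 0 1 x) := by
  unfold Eall at h
  simp only [Finset.mem_union] at h
  rcases h with ((h | h) | h) | h
  · obtain ⟨x', hx', heq⟩ := Finset.mem_image.mp h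
    simp only [Finset.mem_Icc] at hx'
    have h1 : rv x' = rv x := congrArg Prod.fst heq
    have h2 : x' = x := by unfold rv at h1; omega
    subst h2
    exact ⟨hx'.1, hx'.2, (congrArg Prod.snd heq).symm⟩
  · obtain ⟨p, _, heq⟩ := Finset.mem_image.mp h
    have h1 := congrArg Prod.fst heq
    simp only at h1
    exact absurd (h1 ▸ tv_mod p.1 p.2.1 _) (by rw [rv_mod]; omega)
  · obtain ⟨p, _, heq⟩ := Finset.mem_image.mp h
    have h1 := congrArg Prod.fst heq
    simp only at h1
    exact absurd (h1 ▸ tv_mod p.1 p.2.1 _) (by rw [rv_mod]; omega)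
  · obtain ⟨q, _, heq⟩ := Finset.mem_image.mp h
    have h1 := congrArg Prod.fst heq
    simp only at h1
    exact absurd (h1 ▸ tv_mod (K m) q.1 _) (by rw [rv_mod]; omega)

/-- no edges out of a column vertex. -/
lemma edge_out_cv {y u : ℕ} (h : (cv y, u) ∈ Eall n m P) : False := by
  unfold Eall at h
  simp only [Finset.mem_union] at h
  rcases h with ((h | h) | h) | h
  · obtain ⟨x', _, heq⟩ := Finset.mem_image.mp h
    have h1 := congrArg Prod.fst heq
    simp only at h1
    exact absurd (h1 ▸ rv_mod x') (by rw [cv_mod]; omega)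
  · obtain ⟨p, _, heq⟩ := Finset.mem_image.mp h
    have h1 := congrArg Prod.fst heq
    simp only at h1
    exact absurd (h1 ▸ tv_mod p.1 p.2.1 _) (by rw [cv_mod]; omega)
  · obtain ⟨p, _, heq⟩ := Finset.mem_image.mp h
    have h1 := congrArg Prod.fst heq
    simp only at h1
    exact absurd (h1 ▸ tv_mod p.1 p.2.1 _) (by rw [cv_mod]; omega)
  · obtain ⟨q, _, heq⟩ := Finset.mem_image.mp h
    have h1 := congrArg Prod.fst heq
    simp only at h1
    exact absurd (h1 ▸ tv_mod (K m) q.1 _) (by rw [cv_mod]; omega)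

/-- inversion: edges out of an internal tree vertex. -/
lemma edge_out_tv_int {d t x u : ℕ} (hd : d < K m)
    (h : (tv d t (A n m P d t x), u) ∈ Eall n m P) :
    (u = tv (d+1) (2*t-1) (A n m P (d+1) (2*t-1) x)) ∨
    (u = tv (d+1) (2*t) (A n m P (d+1) (2*t) x)) := by
  unfold Eall at h
  simp only [Finset.mem_union] at h
  rcases h with ((h | h) | h) | h
  · obtain ⟨x', _, heq⟩ := Finset.mem_image.mp h
    have h1 := congrArg Prod.fst heq
    simp only at h1
    exact absurd (h1 ▸ rv_mod x') (by rw [tv_mod]; omega)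
  · obtain ⟨p, _, heq⟩ := Finset.mem_image.mp h
    have h1 := congrArg Prod.fst heq
    have h2 := congrArg Prod.snd heq
    simp only at h1 h2
    obtain ⟨hd1, ht1, ha1⟩ := tv_inj h1
    subst hd1; subst ht1
    obtain ⟨hL, _⟩ := A_welldef n m P hd ha1
    left; rw [← h2, hL]
  · obtain ⟨p, _, heq⟩ := Finset.mem_image.mp h
    have h1 := congrArg Prod.fst heq
    have h2 := congrArg Prod.snd heq
    simp only at h1 h2
    obtain ⟨hd1, ht1, ha1⟩ := tv_inj h1
    subst hd1; subst ht1
    obtain ⟨_, hR⟩ := A_welldef n m P hd ha1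
    right; rw [← h2, hR]
  · obtain ⟨q, _, heq⟩ := Finset.mem_image.mp h
    have h1 := congrArg Prod.fst heq
    simp only at h1
    obtain ⟨hd1, _, _⟩ := tv_inj h1
    omega

/-- inversion: edges out of a leaf tree vertex. -/
lemma edge_out_tv_leaf {t x u : ℕ}
    (h : (tv (K m) t (A n m P (K m) t x), u) ∈ Eall n m P) :
    u = cv t ∧ 1 ≤ t ∧ t ≤ m := by
  unfold Eall at h
  simp only [Finset.mem_union] at h
  rcases h with ((h | h) | h) | h
  · obtain ⟨x', _, heq⟩ := Finset.mem_image.mp h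
    have h1 := congrArg Prod.fst heq
    simp only at h1
    exact absurd (h1 ▸ rv_mod x') (by rw [tv_mod]; omega)
  · obtain ⟨p, hp, heq⟩ := Finset.mem_image.mp h
    unfold idxI at hp
    simp only [Finset.mem_filter, Finset.mem_product, Finset.mem_range] at hp
    have h1 := congrArg Prod.fst heq
    simp only at h1
    obtain ⟨hd1, _, _⟩ := tv_inj h1
    omega
  · obtain ⟨p, hp, heq⟩ := Finset.mem_image.mp h
    unfold idxI at hp
    simp only [Finset.mem_filter, Finset.mem_product, Finset.mem_range] at hp
    have h1 := congrArg Prod.fst heq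
    simp only at h1
    obtain ⟨hd1, _, _⟩ := tv_inj h1
    omega
  · obtain ⟨q, hq, heq⟩ := Finset.mem_image.mp h
    simp only [Finset.mem_product, Finset.mem_Icc] at hq
    have h1 := congrArg Prod.fst heq
    have h2 := congrArg Prod.snd heq
    simp only at h1 h2
    obtain ⟨_, ht1, _⟩ := tv_inj h1
    subst ht1
    exact ⟨h2.symm, hq.1.1, hq.1.2⟩


lemma div_lt_succ_mul (a b : ℕ) (h : 0 < b) : a < (a/b+1)*b := by
  have h1 := Nat.div_add_mod a b
  have h2 := Nat.mod_lt a h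
  nlinarith [Nat.div_mul_le_self a b]

lemma tn_ge_one (y d : ℕ) : 1 ≤ tn m y d := Nat.succ_le_succ (Nat.zero_le _)

lemma tn_K {y : ℕ} (hy : 1 ≤ y) : tn m y (K m) = y := by
  unfold tn; rw [Nat.sub_self, pow_zero, Nat.div_one]; omega

lemma tn_le_pow {y d : ℕ} (hy1 : 1 ≤ y) (hy2 : y ≤ m) (hd : d ≤ K m) :
    tn m y d ≤ 2^d := by
  have hm2K : m ≤ 2^(K m) := Nat.le_pow_clog (by norm_num) m
  have hsplit : 2^d * 2^(K m - d) = 2^(K m) := by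
    rw [← pow_add]; congr 1; omega
  have hpos : 0 < 2^(K m - d) := pow_pos (by norm_num) _
  unfold tn
  have : (y-1)/2^(K m - d) < 2^d := by
    rw [Nat.div_lt_iff_lt_mul hpos]
    calc y - 1 < 2^(K m) := by omega
    _ = 2^d * 2^(K m -d) := hsplit.symm
  exact Nat.succ_le_of_lt this

lemma tn_zero {y : ℕ} (hy1 : 1 ≤ y) (hy2 : y ≤ m) : tn m y 0 = 1 := by
  have h1 := tn_le_pow m hy1 hy2 (Nat.zero_le (K m))
  rw [pow_zero] at h1
  have h2 := tn_ge_one m y 0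
  omega

lemma tn_step {y d : ℕ} (hd : d < K m) :
    tn m y d = (tn m y (d+1) - 1) / 2 + 1 := by
  unfold tn
  rw [Nat.add_sub_cancel, Nat.div_div_eq_div_mul, ← pow_succ]
  congr 3
  omega

lemma tn_child {y d : ℕ} (hd : d < K m) :
    tn m y (d+1) = 2 * tn m y d - 1 ∨ tn m y (d+1) = 2 * tn m y d := by
  have h := tn_step m (y := y) hd
  have h1 := tn_ge_one m y (d+1)
  set a := tn m y (d+1) with ha
  set b := tn m y d with hb
  omega

lemma y_in_interval {y d : ℕ} (hy1 : 1 ≤ y) :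
    loI m d (tn m y d) ≤ y ∧ y ≤ hiI m d (tn m y d) := by
  have hpos : 0 < 2^(K m - d) := pow_pos (by norm_num) _
  have h1 : (y-1)/2^(K m -d) * 2^(K m -d) ≤ y - 1 := Nat.div_mul_le_self _ _
  have h2 : y - 1 < ((y-1)/2^(K m -d) + 1) * 2^(K m -d) := div_lt_succ_mul _ _ hpos
  unfold loI hiI tn
  constructor
  · simp only [Nat.add_sub_cancel]
    omega
  · omega

def nodeV (x y d : ℕ) : ℕ := tv d (tn m y d) (A n m P d (tn m y d) x)

def suf (x y d : ℕ) : List ℕ := (List.range' d (K m + 1 - d)).map (nodeV n m P x y) ++ [cv y]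

lemma suf_cons {x y d : ℕ} (hd : d ≤ K m) :
    suf n m P x y d = nodeV n m P x y d :: suf n m P x y (d+1) := by
  unfold suf
  rw [show K m + 1 - d = (K m + 1 - (d+1)) + 1 from by omega, List.range'_succ,
    List.map_cons, List.cons_append]

lemma suf_top (x y : ℕ) : suf n m P x y (K m + 1) = [cv y] := by
  unfold suf
  rw [show K m + 1 - (K m + 1) = 0 from by omega]
  simp

def cpath (x y : ℕ) : List ℕ := rv x :: suf n m P x y 0

lemma e_root {x y : ℕ} (hx1 : 1 ≤ x) (hx2 : x ≤ n) (hy1 : 1 ≤ y) (hy2 : y ≤ m) :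
    (rv x, nodeV n m P x y 0) ∈ Eall n m P := by
  unfold Eall
  apply Finset.mem_union_left
  apply Finset.mem_union_left
  apply Finset.mem_union_left
  unfold Er
  rw [Finset.mem_image]
  refine ⟨x, by simp [hx1, hx2], ?_⟩
  unfold nodeV
  rw [tn_zero m hy1 hy2]

lemma e_step {x y d : ℕ} (hx1 : 1 ≤ x) (hx2 : x ≤ n+1) (hy1 : 1 ≤ y) (hy2 : y ≤ m)
    (hd : d < K m) :
    (nodeV n m P x y d, nodeV n m P x y (d+1)) ∈ Eall n m P := by
  have hmem : (d, tn m y d, x) ∈ idxI n m := by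
    unfold idxI
    simp only [Finset.mem_filter, Finset.mem_product, Finset.mem_range, Finset.mem_Icc]
    refine ⟨⟨hd, ⟨tn_ge_one m y d, ?_⟩, hx1, hx2⟩, tn_le_pow m hy1 hy2 (le_of_lt hd)⟩
    calc tn m y d ≤ 2^d := tn_le_pow m hy1 hy2 (le_of_lt hd)
    _ ≤ 2^(K m) := Nat.pow_le_pow_right (by norm_num) (le_of_lt hd)
  rcases tn_child m (y := y) hd with hc | hc
  · unfold Eall
    apply Finset.mem_union_left
    apply Finset.mem_union_left
    apply Finset.mem_union_right
    unfold EL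
    rw [Finset.mem_image]
    refine ⟨(d, tn m y d, x), hmem, ?_⟩
    simp only [nodeV, hc]
  · unfold Eall
    apply Finset.mem_union_left
    apply Finset.mem_union_right
    unfold ER
    rw [Finset.mem_image]
    refine ⟨(d, tn m y d, x), hmem, ?_⟩
    simp only [nodeV, hc]

lemma e_leaf {x y : ℕ} (hx1 : 1 ≤ x) (hx2 : x ≤ n+1) (hy1 : 1 ≤ y) (hy2 : y ≤ m) :
    (nodeV n m P x y (K m), cv y) ∈ Eall n m P := by
  unfold Eall
  apply Finset.mem_union_right
  unfold Elf
  rw [Finset.mem_image]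
  refine ⟨(y, x), by simp [hy1, hy2, hx1, hx2], ?_⟩
  simp only [nodeV, tn_K m hy1]


def Bc (x y d : ℕ) : ℕ :=
  ((Finset.Icc x n).filter
    (fun i => y ≤ colF m P i ∧ colF m P i ≤ hiI m d (tn m y d))).card

lemma Bc_step_right {x y d : ℕ} (hd : d < K m) (hc : tn m y (d+1) = 2 * tn m y d) :
    Bc n m P x y d = Bc n m P x y (d+1) := by
  have hh : hiI m d (tn m y d) = hiI m (d+1) (tn m y (d+1)) := by
    unfold hiI
    rw [hc, show K m - d = (K m - (d+1)) + 1 from by omega, pow_succ]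
    ring
  unfold Bc
  rw [hh]

lemma Bc_step_left {x y d : ℕ} (hy1 : 1 ≤ y) (hd : d < K m)
    (hc : tn m y (d+1) = 2 * tn m y d - 1) :
    Bc n m P x y d = A n m P (d+1) (2 * tn m y d) x + Bc n m P x y (d+1) := by
  classical
  have ht1 : 1 ≤ tn m y d := tn_ge_one m y d
  rcases Nat.exists_eq_add_of_le ht1 with ⟨t', ht'⟩
  have htt : tn m y d = t' + 1 := by omega
  set E := 2^(K m - (d+1)) with hE
  have h2 : 2^(K m - d) = E * 2 := by
    rw [show K m - d = (K m - (d+1)) + 1 from by omega, pow_succ]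
  have e1 : hiI m d (tn m y d) = 2*(t'*E) + 2*E := by
    unfold hiI; rw [htt, h2]; ring
  have e2 : loI m (d+1) (2 * tn m y d) = 2*(t'*E) + E + 1 := by
    unfold loI; rw [htt, show 2*(t'+1)-1 = 2*t'+1 from by omega,
      show (2*t'+1)*E = 2*(t'*E)+E from by ring]
  have e3 : hiI m (d+1) (2 * tn m y d) = 2*(t'*E) + 2*E := by
    unfold hiI; rw [htt, show 2*(t'+1) = 2*t'+2 from by omega,
      show (2*t'+2)*E = 2*(t'*E)+2*E from by ring]
  have e4 : hiI m (d+1) (tn m y (d+1)) = 2*(t'*E) + E := by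
    unfold hiI; rw [hc, htt, show 2*(t'+1)-1 = 2*t'+1 from by omega,
      show (2*t'+1)*E = 2*(t'*E)+E from by ring]
  have hyh : y ≤ hiI m (d+1) (tn m y (d+1)) := (y_in_interval m (d := d+1) hy1).2
  rw [e4] at hyh
  have key : ∀ c : ℕ,
      (y ≤ c ∧ c ≤ hiI m d (tn m y d)) ↔
      ((loI m (d+1) (2 * tn m y d) ≤ c ∧ c ≤ hiI m (d+1) (2 * tn m y d)) ∨
       (y ≤ c ∧ c ≤ hiI m (d+1) (tn m y (d+1)))) := by
    intro c
    rw [e1, e2, e3, e4]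
    omega
  unfold Bc A
  rw [Finset.filter_congr (fun i _ => key (colF m P i))]
  rw [Finset.filter_or, Finset.card_union_of_disjoint]
  rw [Finset.disjoint_filter]
  intro i _ hA hB
  rw [e2, e3] at hA
  rw [e4] at hB
  omega

lemma A_leaf {x y : ℕ} (hy1 : 1 ≤ y) :
    A n m P (K m) y x = Bc n m P x y (K m) := by
  unfold A Bc
  congr 1
  apply Finset.filter_congr
  intro i _
  have h1 : loI m (K m) y = y := by
    unfold loI; rw [Nat.sub_self, pow_zero]; omega
  have h2 : hiI m (K m) (tn m y (K m)) = y := by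
    unfold hiI; rw [tn_K m hy1, Nat.sub_self, pow_zero]; omega
  have h3 : hiI m (K m) y = y := by
    unfold hiI; rw [Nat.sub_self, pow_zero]; omega
  rw [h1, h2, h3]

lemma weight_suf {x y : ℕ} (hy1 : 1 ≤ y) (hy2 : y ≤ m) :
    ∀ j d, K m - d = j → d ≤ K m →
      walkWeight wF (suf n m P x y d) = (Bc n m P x y d : ℤ) := by
  intro j
  induction j with
  | zero =>
    intro d hj hd
    have hdK : d = K m := by omega
    subst hdK
    rw [suf_cons n m P le_rfl, suf_top]
    rw [walkWeight_cons_cons, walkWeight_singleton]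
    unfold nodeV
    rw [wF_tv_cv, tn_K m hy1, A_leaf n m P hy1]
    ring
  | succ j ih =>
    intro d hj _
    have hd : d < K m := by omega
    rw [suf_cons n m P (le_of_lt hd), suf_cons n m P (by omega : d+1 ≤ K m),
      walkWeight_cons_cons,
      ← suf_cons n m P (by omega : d+1 ≤ K m),
      ih (d+1) (by omega) (by omega)]
    unfold nodeV
    rw [wF_tv_tv]
    rcases tn_child m (y := y) hd with hc | hc
    · have ht1 : 1 ≤ tn m y d := tn_ge_one m y d
      have hodd : tn m y (d+1) % 2 = 1 := by omega
      rw [if_pos hodd]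
      have hsplit := A_split n m P (d := d) (t := tn m y d) (x := x) hd
      have hstep := Bc_step_left n m P (x := x) hy1 hd hc
      rw [hc]
      push_cast
      omega
    · have heven : tn m y (d+1) % 2 = 0 := by omega
      rw [if_neg (by omega)]
      have hstep := Bc_step_right n m P (x := x) hd hc
      rw [hstep]
      ring


lemma chain_suf {x y : ℕ} (hx1 : 1 ≤ x) (hx2 : x ≤ n+1) (hy1 : 1 ≤ y) (hy2 : y ≤ m) :
    ∀ j d, K m - d = j → d ≤ K m →
      List.Chain' (fun u v => (u, v) ∈ Eall n m P) (suf n m P x y d) := by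
  intro j
  induction j with
  | zero =>
    intro d hj hd
    have hdK : d = K m := by omega
    subst hdK
    rw [suf_cons n m P le_rfl, suf_top]
    exact List.isChain_cons_cons.mpr ⟨e_leaf n m P hx1 hx2 hy1 hy2, List.isChain_singleton _⟩
  | succ j ih =>
    intro d hj _
    have hd : d < K m := by omega
    rw [suf_cons n m P (le_of_lt hd), suf_cons n m P (by omega : d+1 ≤ K m)]
    refine List.isChain_cons_cons.mpr ⟨e_step n m P hx1 hx2 hy1 hy2 hd, ?_⟩
    rw [← suf_cons n m P (by omega : d+1 ≤ K m)]
    exact ih (d+1) (by omega) (by omega)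

lemma mem_suf_V {x y : ℕ} (hx1 : 1 ≤ x) (hx2 : x ≤ n+1) (hy1 : 1 ≤ y) (hy2 : y ≤ m)
    {d : ℕ} (hd : d ≤ K m) :
    ∀ v ∈ suf n m P x y d, v ∈ Vall n m P := by
  intro v hv
  unfold suf at hv
  rw [List.mem_append] at hv
  rcases hv with hv | hv
  · rw [List.mem_map] at hv
    obtain ⟨e, he, rfl⟩ := hv
    rw [List.mem_range'_1] at he
    have he2 : e ≤ K m := by omega
    unfold Vall
    apply Finset.mem_union_right
    unfold nodeV
    exact mem_VT n m P he2 (tn_ge_one m y e) (tn_le_pow m hy1 hy2 he2) hx1 hx2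
  · rw [List.mem_singleton] at hv
    subst hv
    unfold Vall
    apply Finset.mem_union_left
    apply Finset.mem_union_right
    unfold Vc
    exact Finset.mem_image.mpr ⟨y, by simp [hy1, hy2], rfl⟩

lemma nodup_cpath (x y : ℕ) : (cpath n m P x y).Nodup := by
  unfold cpath suf
  rw [List.nodup_cons]
  constructor
  · intro hmem
    rw [List.mem_append] at hmem
    rcases hmem with h | h
    · rw [List.mem_map] at h
      obtain ⟨e, _, heq⟩ := h
      have h1 := rv_mod x
      have h2 := tv_mod e (tn m y e) (A n m P e (tn m y e) x)
      unfold nodeV at heq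
      omega
    · rw [List.mem_singleton] at h
      have h1 := rv_mod x
      have h2 := cv_mod y
      omega
  · rw [List.nodup_append]
    refine ⟨?_, List.nodup_singleton _, ?_⟩
    · apply List.Nodup.map
      · intro e e' hee
        unfold nodeV at hee
        exact (tv_inj hee).1
      · exact List.nodup_range'
    · intro v hv b hb hvb
      rw [List.mem_singleton] at hb
      subst hvb
      subst hb
      rw [List.mem_map] at hv
      obtain ⟨e, _, heq⟩ := hv
      have h1 := cv_mod y
      have h2 := tv_mod e (tn m y e) (A n m P e (tn m y e) x)
      unfold nodeV at heq
      omega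

lemma cpath_is_path {x y : ℕ} (hx1 : 1 ≤ x) (hx2 : x ≤ n) (hy1 : 1 ≤ y) (hy2 : y ≤ m) :
    IsPathFromTo (Hgr n m P) (cpath n m P x y) (rv x) (cv y) := by
  refine ⟨⟨⟨by unfold cpath; simp, ?_, ?_⟩, ?_, ?_⟩, nodup_cpath n m P x y⟩
  · intro v hv
    unfold cpath at hv
    rw [List.mem_cons] at hv
    rcases hv with rfl | hv
    · show rv x ∈ Vall n m P
      unfold Vall
      apply Finset.mem_union_left
      apply Finset.mem_union_left
      exact Finset.mem_image.mpr ⟨x, by simp [hx1, hx2], rfl⟩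
    · exact mem_suf_V n m P hx1 (by omega) hy1 hy2 (Nat.zero_le (K m)) v hv
  · show List.Chain' (fun u v => (u, v) ∈ Eall n m P) (cpath n m P x y)
    unfold cpath
    rw [suf_cons n m P (Nat.zero_le _)]
    refine List.isChain_cons_cons.mpr ⟨e_root n m P hx1 hx2 hy1 hy2, ?_⟩
    rw [← suf_cons n m P (Nat.zero_le _)]
    exact chain_suf n m P hx1 (by omega) hy1 hy2 (K m) 0 (by omega) (Nat.zero_le _)
  · rfl
  · unfold cpath suf
    rw [show rv x :: ((List.range' 0 (K m + 1 - 0)).map (nodeV n m P x y) ++ [cv y])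
      = (rv x :: (List.range' 0 (K m + 1 - 0)).map (nodeV n m P x y)) ++ [cv y] from rfl]
    exact List.getLast?_concat

lemma path_tail {H : WDigraph} {a b v : ℕ} {l : List ℕ} {u : ℕ}
    (h : IsPathFromTo H (a :: b :: l) u v) : IsPathFromTo H (b :: l) b v := by
  obtain ⟨⟨⟨_, hmem, hchain⟩, _, hlast⟩, hnodup⟩ := h
  refine ⟨⟨⟨by simp, ?_, hchain.tail⟩, rfl, ?_⟩, hnodup.of_cons⟩
  · intro w hw
    exact hmem w (List.mem_cons_of_mem a hw)
  · rw [← List.getLast?_cons_cons (a := a)]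
    exact hlast

lemma unique_suf {y : ℕ} (hy1 : 1 ≤ y) (hy2 : y ≤ m) :
    ∀ j d t x l, K m - d = j → d ≤ K m →
      IsPathFromTo (Hgr n m P) l (tv d t (A n m P d t x)) (cv y) →
      t = tn m y d ∧ l = suf n m P x y d := by
  intro j
  induction j with
  | zero =>
    intro d t x l hj hd hpath
    have hdK : d = K m := by omega
    subst hdK
    obtain ⟨⟨⟨hne, hmem, hchain⟩, hhead, hlast⟩, hnodup⟩ := hpath
    match l, hne with
    | a :: l1, _ =>
      have ha : a = tv (K m) t (A n m P (K m) t x) := by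
        simp at hhead; exact hhead
      subst ha
      match l1 with
      | [] =>
        exfalso
        simp at hlast
        have h1 := tv_mod (K m) t (A n m P (K m) t x)
        have h2 := cv_mod y
        omega
      | b :: l2 =>
        have hedge : (tv (K m) t (A n m P (K m) t x), b) ∈ Eall n m P :=
          (List.isChain_cons_cons.mp hchain).1
        obtain ⟨rfl, ht1, ht2⟩ := edge_out_tv_leaf n m P hedge
        match l2 with
        | [] =>
          rw [List.getLast?_cons_cons] at hlast
          simp at hlast
          have hty : t = y := by unfold cv at hlast; omega
          subst hty
          refine ⟨(tn_K m hy1).symm, ?_⟩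
          rw [suf_cons n m P le_rfl, suf_top]
          unfold nodeV
          rw [tn_K m hy1]
        | c :: l3 =>
          exfalso
          have hedge2 : (cv t, c) ∈ Eall n m P :=
            (List.isChain_cons_cons.mp (List.isChain_cons_cons.mp hchain).2).1
          exact edge_out_cv n m P hedge2
  | succ j ih =>
    intro d t x l hj hdK hpath
    have hd : d < K m := by omega
    obtain ⟨⟨⟨hne, hmem, hchain⟩, hhead, hlast⟩, hnodup⟩ := hpath
    match l, hne with
    | a :: l1, _ =>
      have ha : a = tv d t (A n m P d t x) := by simp at hhead; exact hhead
      subst ha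
      match l1 with
      | [] =>
        exfalso
        simp at hlast
        have h1 := tv_mod d t (A n m P d t x)
        have h2 := cv_mod y
        omega
      | b :: l2 =>
        have hedge : (tv d t (A n m P d t x), b) ∈ Eall n m P :=
          (List.isChain_cons_cons.mp hchain).1
        have htail : IsPathFromTo (Hgr n m P) (b :: l2) b (cv y) := by
          apply path_tail (a := tv d t (A n m P d t x)) (u := tv d t (A n m P d t x))
          exact ⟨⟨⟨by simp, hmem, hchain⟩, hhead, hlast⟩, hnodup⟩
        rcases edge_out_tv_int n m P hd hedge with hb | hb
        · subst hb
          obtain ⟨htn, hsuf⟩ := ih (d+1) (2*t-1) x _ (by omega) (by omega) htail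
          have hts := tn_step m (y := y) hd
          have htge := tn_ge_one m y (d+1)
          have htd : t = tn m y d := by
            set a1 := tn m y (d+1) with ha1
            set b1 := tn m y d with hb1
            omega
          refine ⟨htd, ?_⟩
          rw [suf_cons n m P (le_of_lt hd), ← hsuf]
          unfold nodeV
          rw [← htd]
        · subst hb
          obtain ⟨htn, hsuf⟩ := ih (d+1) (2*t) x _ (by omega) (by omega) htail
          have hts := tn_step m (y := y) hd
          have htge := tn_ge_one m y (d+1)
          have htd : t = tn m y d := by
            set a1 := tn m y (d+1) with ha1
            set b1 := tn m y d with hb1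
            omega
          refine ⟨htd, ?_⟩
          rw [suf_cons n m P (le_of_lt hd), ← hsuf]
          unfold nodeV
          rw [← htd]

lemma unique_cpath {x y : ℕ} (hx1 : 1 ≤ x) (hx2 : x ≤ n) (hy1 : 1 ≤ y) (hy2 : y ≤ m) :
    ∀ l, IsPathFromTo (Hgr n m P) l (rv x) (cv y) → l = cpath n m P x y := by
  intro l hpath
  obtain ⟨⟨⟨hne, hmem, hchain⟩, hhead, hlast⟩, hnodup⟩ := hpath
  match l, hne with
  | a :: l1, _ =>
    have ha : a = rv x := by simp at hhead; exact hhead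
    subst ha
    match l1 with
    | [] =>
      exfalso
      simp at hlast
      have h1 := rv_mod x
      have h2 := cv_mod y
      omega
    | b :: l2 =>
      have hedge : (rv x, b) ∈ Eall n m P := (List.isChain_cons_cons.mp hchain).1
      obtain ⟨_, _, hb⟩ := edge_out_rv n m P hedge
      subst hb
      have htail : IsPathFromTo (Hgr n m P) (tv 0 1 (A n m P 0 1 x) :: l2)
          (tv 0 1 (A n m P 0 1 x)) (cv y) := by
        apply path_tail (a := rv x) (u := rv x)
        exact ⟨⟨⟨by simp, hmem, hchain⟩, hhead, hlast⟩, hnodup⟩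
      obtain ⟨_, hsuf⟩ := unique_suf n m P hy1 hy2 (K m) 0 1 x _ (by omega) (Nat.zero_le _) htail
      unfold cpath
      rw [← hsuf]


def rk (u : ℕ) : ℕ :=
  if u % 3 = 0 then 0 else if u % 3 = 2 then dOf u + 1 else K m + 2

lemma rk_lt : ∀ e ∈ Eall n m P, rk m e.1 < rk m e.2 := by
  intro e he
  unfold Eall at he
  simp only [Finset.mem_union] at he
  rcases he with ((he | he) | he) | he
  · obtain ⟨x, _, rfl⟩ := Finset.mem_image.mp he
    unfold rk
    rw [if_pos (rv_mod x)]
    have h2 := tv_mod 0 1 (A n m P 0 1 x)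
    rw [if_neg (by omega), if_pos h2]
    omega
  · obtain ⟨p, _, rfl⟩ := Finset.mem_image.mp he
    unfold rk
    have h1 := tv_mod p.1 p.2.1 (A n m P p.1 p.2.1 p.2.2)
    have h2 := tv_mod (p.1+1) (2*p.2.1-1) (A n m P (p.1+1) (2*p.2.1-1) p.2.2)
    rw [if_neg (by omega), if_pos h1, if_neg (by omega), if_pos h2, dOf_tv, dOf_tv]
    omega
  · obtain ⟨p, _, rfl⟩ := Finset.mem_image.mp he
    unfold rk
    have h1 := tv_mod p.1 p.2.1 (A n m P p.1 p.2.1 p.2.2)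
    have h2 := tv_mod (p.1+1) (2*p.2.1) (A n m P (p.1+1) (2*p.2.1) p.2.2)
    rw [if_neg (by omega), if_pos h1, if_neg (by omega), if_pos h2, dOf_tv, dOf_tv]
    omega
  · obtain ⟨q, hq, rfl⟩ := Finset.mem_image.mp he
    simp only [Finset.mem_product, Finset.mem_Icc] at hq
    unfold rk
    have h1 := tv_mod (K m) q.1 (A n m P (K m) q.1 q.2)
    have h2 := cv_mod q.1
    rw [if_neg (by omega), if_pos h1, if_neg (by omega), if_neg (by omega), dOf_tv]
    omega

lemma chain_rk : ∀ (l : List ℕ) (a b : ℕ),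
    List.Chain (fun u v => (u, v) ∈ Eall n m P) a l → l.getLast? = some b →
    rk m a < rk m b := by
  intro l
  induction l with
  | nil => intro a b _ hlast; simp at hlast
  | cons c l' ih =>
    intro a b hch hlast
    rcases List.chain_cons.mp hch with ⟨hedge, hch'⟩
    have h1 : rk m a < rk m c := rk_lt n m P (a, c) hedge
    cases l' with
    | nil =>
      simp at hlast
      subst hlast
      exact h1
    | cons d' l'' =>
      have h2 := ih c b hch' (by rw [← List.getLast?_cons_cons (a := c)]; exact hlast)
      omega

lemma hgr_dag : IsDAG (Hgr n m P) := by
  rintro ⟨v, l, hlen, ⟨⟨hne, hmem, hchain⟩, hhead, hlast⟩⟩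
  match l, hlen with
  | a :: b :: l2, _ =>
    have ha : a = v := by simp at hhead; exact hhead
    have hch : List.Chain (fun u w => (u, w) ∈ Eall n m P) a (b :: l2) := hchain
    have hlast2 : (b :: l2).getLast? = some a := by
      rw [← List.getLast?_cons_cons (a := a), hlast, ha]
    exact absurd (chain_rk n m P (b :: l2) a a hch hlast2) (lt_irrefl _)

lemma wF_nonneg : ∀ e ∈ Eall n m P, 0 ≤ wF e := by
  intro e he
  unfold Eall at he
  simp only [Finset.mem_union] at he
  rcases he with ((he | he) | he) | he
  · obtain ⟨x, _, rfl⟩ := Finset.mem_image.mp he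
    rw [wF_rv]
  · obtain ⟨p, hp, rfl⟩ := Finset.mem_image.mp he
    unfold idxI at hp
    simp only [Finset.mem_filter, Finset.mem_product, Finset.mem_range, Finset.mem_Icc] at hp
    obtain ⟨⟨hd, ⟨ht1, _⟩, _, _⟩, _⟩ := hp
    rw [wF_tv_tv, if_pos (by omega)]
    have hsplit := A_split n m P (d := p.1) (t := p.2.1) (x := p.2.2) hd
    simp only [sub_nonneg, Nat.cast_le]
    omega
  · obtain ⟨p, hp, rfl⟩ := Finset.mem_image.mp he
    unfold idxI at hp
    simp only [Finset.mem_filter, Finset.mem_product, Finset.mem_range, Finset.mem_Icc] at hp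
    obtain ⟨⟨hd, ⟨ht1, _⟩, _, _⟩, _⟩ := hp
    rw [wF_tv_tv, if_neg (by omega)]
  · obtain ⟨q, _, rfl⟩ := Finset.mem_image.mp he
    rw [wF_tv_cv]
    positivity

lemma sum_A_one_le {d : ℕ} : ∑ t ∈ Finset.Icc 1 (2^d), A n m P d t 1 ≤ n := by
  classical
  have hdisj : ∀ t ∈ Finset.Icc 1 (2^d), ∀ t' ∈ Finset.Icc 1 (2^d), t ≠ t' →
      Disjoint ((Finset.Icc 1 n).filter
          (fun i => loI m d t ≤ colF m P i ∧ colF m P i ≤ hiI m d t))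
        ((Finset.Icc 1 n).filter
          (fun i => loI m d t' ≤ colF m P i ∧ colF m P i ≤ hiI m d t')) := by
    intro t _ t' _ hne
    rw [Finset.disjoint_left]
    intro i hi1 hi2
    rw [Finset.mem_filter] at hi1 hi2
    obtain ⟨_, h1, h2⟩ := hi1
    obtain ⟨_, h3, h4⟩ := hi2
    simp only [loI, hiI] at h1 h2 h3 h4
    set E := 2^(K m - d) with hE
    rcases Nat.lt_or_ge t t' with hlt | hge
    · have : t * E ≤ (t'-1) * E := Nat.mul_le_mul_right E (by omega)
      omega
    · have hlt : t' < t := by omega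
      have : t' * E ≤ (t-1) * E := Nat.mul_le_mul_right E (by omega)
      omega
  calc ∑ t ∈ Finset.Icc 1 (2^d), A n m P d t 1
      = ((Finset.Icc 1 (2^d)).biUnion (fun t => (Finset.Icc 1 n).filter
          (fun i => loI m d t ≤ colF m P i ∧ colF m P i ≤ hiI m d t))).card := by
        rw [Finset.card_biUnion hdisj]; rfl
    _ ≤ (Finset.Icc 1 n).card := by
        apply Finset.card_le_card
        intro i hi
        rw [Finset.mem_biUnion] at hi
        obtain ⟨t, _, hit⟩ := hi
        exact (Finset.mem_filter.mp hit).1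
    _ ≤ n := by rw [Nat.card_Icc]; omega

lemma card_VT_le_aux : (VT n m P).card ≤ ∑ d ∈ Finset.Icc 0 (K m), (n + 2^d) := by
  classical
  unfold VT
  calc ((Finset.Icc 0 (K m)).biUnion _).card
      ≤ ∑ d ∈ Finset.Icc 0 (K m), ((Finset.Icc 1 (2^d)).biUnion (fun t =>
          (Finset.Icc 1 (n+1)).image (fun x => tv d t (A n m P d t x)))).card :=
        Finset.card_biUnion_le
    _ ≤ ∑ d ∈ Finset.Icc 0 (K m), (n + 2^d) := by
        apply Finset.sum_le_sum
        intro d _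
        calc ((Finset.Icc 1 (2^d)).biUnion _).card
            ≤ ∑ t ∈ Finset.Icc 1 (2^d),
                ((Finset.Icc 1 (n+1)).image (fun x => tv d t (A n m P d t x))).card :=
              Finset.card_biUnion_le
          _ ≤ ∑ t ∈ Finset.Icc 1 (2^d), (A n m P d t 1 + 1) := by
              apply Finset.sum_le_sum
              intro t _
              have himg : (Finset.Icc 1 (n+1)).image (fun x => tv d t (A n m P d t x))
                  = ((Finset.Icc 1 (n+1)).image (fun x => A n m P d t x)).image (tv d t) := by
                rw [Finset.image_image]
                rfl
              rw [himg, Finset.card_image_of_injective _ (fun a a' h => (tv_inj h).2.2)]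
              calc ((Finset.Icc 1 (n+1)).image (fun x => A n m P d t x)).card
                  ≤ (Finset.Icc 0 (A n m P d t 1)).card := by
                    apply Finset.card_le_card
                    intro b hb
                    rw [Finset.mem_image] at hb
                    obtain ⟨x, hx, rfl⟩ := hb
                    rw [Finset.mem_Icc] at hx ⊢
                    exact ⟨Nat.zero_le _, A_anti n m P hx.1 d t⟩
                _ = A n m P d t 1 + 1 := by rw [Nat.card_Icc]; omega
          _ = (∑ t ∈ Finset.Icc 1 (2^d), A n m P d t 1) + 2^d := by
              rw [Finset.sum_add_distrib, Finset.sum_const, Nat.card_Icc]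
              simp
          _ ≤ n + 2^d := by
              have := sum_A_one_le n m P (d := d)
              omega

lemma card_Er_le : (Er n m P).card ≤ n := by
  calc (Er n m P).card ≤ (Finset.Icc 1 n).card := Finset.card_image_le
    _ ≤ n := by rw [Nat.card_Icc]; omega

lemma card_EL_le : (EL n m P).card ≤ (VT n m P).card := by
  apply Finset.card_le_card_of_injOn Prod.fst
  · intro e he
    obtain ⟨p, hp, rfl⟩ := Finset.mem_image.mp he
    unfold idxI at hp
    simp only [Finset.mem_filter, Finset.mem_product, Finset.mem_range, Finset.mem_Icc] at hp
    obtain ⟨⟨hd, ⟨ht1, _⟩, hx1, hx2⟩, hts⟩ := hp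
    exact mem_VT n m P (by omega) ht1 hts hx1 hx2
  · intro e he e' he' hfst
    simp only [Finset.mem_coe] at he he'
    obtain ⟨p, hp, rfl⟩ := Finset.mem_image.mp he
    obtain ⟨p', hp', rfl⟩ := Finset.mem_image.mp he'
    unfold idxI at hp hp'
    simp only [Finset.mem_filter, Finset.mem_product, Finset.mem_range, Finset.mem_Icc] at hp hp'
    simp only at hfst
    obtain ⟨hd1, ht1, ha1⟩ := tv_inj hfst
    rw [← hd1, ← ht1] at ha1
    have hL := (A_welldef n m P (t := p.2.1) (x := p.2.2) (x' := p'.2.2) hp.1.1 ha1).1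
    simp only [Prod.mk.injEq]
    refine ⟨hfst, ?_⟩
    rw [← hd1, ← ht1, ← hL]

lemma card_ER_le : (ER n m P).card ≤ (VT n m P).card := by
  apply Finset.card_le_card_of_injOn Prod.fst
  · intro e he
    obtain ⟨p, hp, rfl⟩ := Finset.mem_image.mp he
    unfold idxI at hp
    simp only [Finset.mem_filter, Finset.mem_product, Finset.mem_range, Finset.mem_Icc] at hp
    obtain ⟨⟨hd, ⟨ht1, _⟩, hx1, hx2⟩, hts⟩ := hp
    exact mem_VT n m P (by omega) ht1 hts hx1 hx2
  · intro e he e' he' hfst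
    simp only [Finset.mem_coe] at he he'
    obtain ⟨p, hp, rfl⟩ := Finset.mem_image.mp he
    obtain ⟨p', hp', rfl⟩ := Finset.mem_image.mp he'
    unfold idxI at hp hp'
    simp only [Finset.mem_filter, Finset.mem_product, Finset.mem_range, Finset.mem_Icc] at hp hp'
    simp only at hfst
    obtain ⟨hd1, ht1, ha1⟩ := tv_inj hfst
    rw [← hd1, ← ht1] at ha1
    have hR := (A_welldef n m P (t := p.2.1) (x := p.2.2) (x' := p'.2.2) hp.1.1 ha1).2
    simp only [Prod.mk.injEq]
    refine ⟨hfst, ?_⟩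
    rw [← hd1, ← ht1, ← hR]

lemma card_Elf_le : (Elf n m P).card ≤ (VT n m P).card := by
  have hm2K : m ≤ 2^(K m) := Nat.le_pow_clog (by norm_num) m
  apply Finset.card_le_card_of_injOn Prod.fst
  · intro e he
    obtain ⟨q, hq, rfl⟩ := Finset.mem_image.mp he
    simp only [Finset.mem_product, Finset.mem_Icc] at hq
    exact mem_VT n m P le_rfl hq.1.1 (by omega) hq.2.1 hq.2.2
  · intro e he e' he' hfst
    simp only [Finset.mem_coe] at he he'
    obtain ⟨q, hq, rfl⟩ := Finset.mem_image.mp he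
    obtain ⟨q', hq', rfl⟩ := Finset.mem_image.mp he'
    simp only at hfst
    obtain ⟨_, ht1, _⟩ := tv_inj hfst
    simp only [Prod.mk.injEq]
    exact ⟨hfst, by rw [ht1]⟩

lemma pow_sum_two : ∀ k : ℕ, ∑ i ∈ Finset.range k, 2^i = 2^k - 1 := by
  intro k
  induction k with
  | zero => simp
  | succ k ih =>
    rw [Finset.sum_range_succ, ih, pow_succ]
    have : 1 ≤ 2^k := Nat.one_le_two_pow
    omega

lemma card_VT_le' : (VT n m P).card ≤ (K m + 1) * n + 2^(K m + 1) := by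
  calc (VT n m P).card ≤ ∑ d ∈ Finset.Icc 0 (K m), (n + 2^d) := card_VT_le_aux n m P
    _ = (K m + 1) * n + ∑ d ∈ Finset.Icc 0 (K m), 2^d := by
        rw [Finset.sum_add_distrib, Finset.sum_const, Nat.card_Icc]
        simp [Nat.mul_comm]
    _ ≤ (K m + 1) * n + 2^(K m + 1) := by
        have hr : Finset.Icc 0 (K m) = Finset.range (K m + 1) := by
          ext a; simp [Finset.mem_Icc, Finset.mem_range]
        have hs : ∑ d ∈ Finset.Icc 0 (K m), 2^d = 2^(K m + 1) - 1 := by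
          rw [hr, pow_sum_two]
        exact Nat.add_le_add_left (hs ▸ Nat.sub_le _ _) _

lemma K_le_log : K m ≤ Nat.log 2 m + 1 := by
  rcases Nat.lt_or_ge m 2 with hm | hm
  · interval_cases m <;> simp [K]
  · have h1 : 2^(K m - 1) < m := by
      have := Nat.pow_pred_clog_lt_self (b := 2) (by norm_num) (by omega : 1 < m)
      simpa [K] using this
    have h2 : K m - 1 ≤ Nat.log 2 m :=
      (Nat.le_log_iff_pow_le (by norm_num) (by omega)).mpr (le_of_lt h1)
    omega

lemma pow2K_le (hm : 1 ≤ m) : 2^(K m) ≤ 2 * m := by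
  rcases Nat.lt_or_ge m 2 with hm2 | hm2
  · have : m = 1 := by omega
    subst this
    simp [K]
  · have h1 : 2^(K m - 1) < m := by
      have := Nat.pow_pred_clog_lt_self (b := 2) (by norm_num) (by omega : 1 < m)
      simpa [K] using this
    rcases Nat.eq_zero_or_pos (K m) with h0 | h0
    · rw [h0, pow_zero]; omega
    · have : 2^(K m) = 2 * 2^(K m - 1) := by
        rw [← pow_succ']
        congr 1
        omega
      omega

lemma size_bound_nat (hm : 1 ≤ m) :
    (Vall n m P).card + (Eall n m P).card ≤ (n + m) * (4 * K m + 30) := by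
  have hT := card_VT_le' n m P
  have h2K := pow2K_le m hm
  have hV : (Vall n m P).card ≤ n + m + (VT n m P).card := by
    unfold Vall
    calc (Vr n ∪ Vc m ∪ VT n m P).card
        ≤ (Vr n ∪ Vc m).card + (VT n m P).card := Finset.card_union_le _ _
      _ ≤ (Vr n).card + (Vc m).card + (VT n m P).card := by
          have := Finset.card_union_le (Vr n) (Vc m)
          omega
      _ ≤ n + m + (VT n m P).card := by
          have h1 : (Vr n).card ≤ n := by
            calc (Vr n).card ≤ (Finset.Icc 1 n).card := Finset.card_image_le
              _ ≤ n := by rw [Nat.card_Icc]; omega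
          have h2 : (Vc m).card ≤ m := by
            calc (Vc m).card ≤ (Finset.Icc 1 m).card := Finset.card_image_le
              _ ≤ m := by rw [Nat.card_Icc]; omega
          omega
  have hE : (Eall n m P).card ≤ n + 3 * (VT n m P).card := by
    unfold Eall
    have c1 := card_Er_le n m P
    have c2 := card_EL_le n m P
    have c3 := card_ER_le n m P
    have c4 := card_Elf_le n m P
    calc (Er n m P ∪ EL n m P ∪ ER n m P ∪ Elf n m P).card
        ≤ (Er n m P ∪ EL n m P ∪ ER n m P).card + (Elf n m P).card :=
          Finset.card_union_le _ _
      _ ≤ (Er n m P ∪ EL n m P).card + (ER n m P).card + (Elf n m P).card := by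
          have := Finset.card_union_le (Er n m P ∪ EL n m P) (ER n m P)
          omega
      _ ≤ (Er n m P).card + (EL n m P).card + (ER n m P).card + (Elf n m P).card := by
          have := Finset.card_union_le (Er n m P) (EL n m P)
          omega
      _ ≤ n + 3 * (VT n m P).card := by omega
  have h1 : 2^(K m + 1) ≤ 4 * m := by
    rw [pow_succ]
    omega
  have hTT : (VT n m P).card ≤ (K m + 1) * n + 4 * m := by omega
  have : (Vall n m P).card + (Eall n m P).card ≤
      2*n + m + 4 * ((K m + 1) * n + 4 * m) := by omega
  calc (Vall n m P).card + (Eall n m P).card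
      ≤ 2*n + m + 4 * ((K m + 1) * n + 4 * m) := this
    _ ≤ (n + m) * (4 * K m + 30) := by nlinarith [Nat.zero_le (K m * m), Nat.zero_le n, Nat.zero_le m]

lemma colF_le (hP : RightSubstochastic n m P) {i : ℕ} (hi1 : 1 ≤ i) (hi2 : i ≤ n) :
    colF m P i ≤ m := by
  classical
  unfold colF
  set F := (Finset.Icc 1 m).filter (fun j => P i j ≠ 0) with hF
  rcases Finset.eq_empty_or_nonempty F with he | ⟨j0, hj0⟩
  · rw [he]; simp
  · have hFj : F = {j0} := by
      apply Finset.eq_singleton_iff_unique_mem.mpr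
      refine ⟨hj0, ?_⟩
      intro j hj
      rw [hF, Finset.mem_filter, Finset.mem_Icc] at hj hj0
      exact hP.2 i hi1 hi2 j j0 hj.1.1 hj.1.2 hj0.1.1 hj0.1.2 hj.2 hj0.2
    rw [hFj]
    simp only [Finset.sum_singleton, id]
    have := hj0
    rw [hF, Finset.mem_filter, Finset.mem_Icc] at this
    exact this.1.2

lemma row_sum (hP : RightSubstochastic n m P) {i y : ℕ} (hi1 : 1 ≤ i) (hi2 : i ≤ n)
    (hy1 : 1 ≤ y) :
    ∑ j ∈ Finset.Icc y m, P i j = if y ≤ colF m P i then 1 else 0 := by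
  classical
  set F := (Finset.Icc 1 m).filter (fun j => P i j ≠ 0) with hF
  rcases Finset.eq_empty_or_nonempty F with he | ⟨j0, hj0⟩
  · have hcol : colF m P i = 0 := by unfold colF; rw [← hF, he]; simp
    rw [hcol, if_neg (by omega)]
    apply Finset.sum_eq_zero
    intro j hj
    rw [Finset.mem_Icc] at hj
    by_contra hne
    have : j ∈ F := by
      rw [hF, Finset.mem_filter, Finset.mem_Icc]
      exact ⟨⟨by omega, hj.2⟩, hne⟩
    rw [he] at this
    simp at this
  · have hj0' := hj0
    rw [hF, Finset.mem_filter, Finset.mem_Icc] at hj0'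
    have hFj : F = {j0} := by
      apply Finset.eq_singleton_iff_unique_mem.mpr
      refine ⟨hj0, ?_⟩
      intro j hj
      rw [hF, Finset.mem_filter, Finset.mem_Icc] at hj
      exact hP.2 i hi1 hi2 j j0 hj.1.1 hj.1.2 hj0'.1.1 hj0'.1.2 hj.2 hj0'.2
    have hcol : colF m P i = j0 := by
      unfold colF; rw [← hF, hFj]; simp
    have hval : P i j0 = 1 := by
      rcases hP.1 i j0 hi1 hi2 hj0'.1.1 hj0'.1.2 with h | h
      · exact absurd h hj0'.2
      · exact h
    have hzero : ∀ j, 1 ≤ j → j ≤ m → j ≠ j0 → P i j = 0 := by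
      intro j h1 h2 hne
      by_contra hne2
      have : j ∈ F := by
        rw [hF, Finset.mem_filter, Finset.mem_Icc]
        exact ⟨⟨h1, h2⟩, hne2⟩
      rw [hFj] at this
      simp at this
      exact hne this
    rw [hcol]
    by_cases hc : y ≤ j0
    · rw [if_pos hc]
      rw [Finset.sum_eq_single_of_mem j0 (by rw [Finset.mem_Icc]; exact ⟨hc, hj0'.1.2⟩)]
      · exact hval
      · intro j hj hne
        rw [Finset.mem_Icc] at hj
        exact hzero j (by omega) hj.2 hne
    · rw [if_neg hc]
      apply Finset.sum_eq_zero
      intro j hj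
      rw [Finset.mem_Icc] at hj
      exact hzero j (by omega) hj.2 (by omega)

lemma Bc_eq_sum (hP : RightSubstochastic n m P) {x y : ℕ} (hx1 : 1 ≤ x)
    (hy1 : 1 ≤ y) (hy2 : y ≤ m) :
    ∑ i ∈ Finset.Icc x n, ∑ j ∈ Finset.Icc y m, P i j = (Bc n m P x y 0 : ℤ) := by
  classical
  have hm2K : m ≤ 2^(K m) := Nat.le_pow_clog (by norm_num) m
  have hhi : hiI m 0 (tn m y 0) = 2^(K m) := by
    unfold hiI
    rw [tn_zero m hy1 hy2]
    simp
  unfold Bc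
  rw [hhi]
  have hrow : ∀ i ∈ Finset.Icc x n,
      ∑ j ∈ Finset.Icc y m, P i j = if y ≤ colF m P i then 1 else 0 := by
    intro i hi
    rw [Finset.mem_Icc] at hi
    exact row_sum n m P hP (by omega) hi.2 hy1
  rw [Finset.sum_congr rfl hrow, Finset.sum_boole]
  congr 1
  congr 1
  apply Finset.filter_congr
  intro i hi
  rw [Finset.mem_Icc] at hi
  have := colF_le n m P hP (i := i) (by omega) hi.2
  constructor
  · intro h; exact ⟨h, by omega⟩
  · intro h; exact h.1

end Params


lemma weight_cpath (n m : ℕ) (P : ℕ → ℕ → ℤ) {x y : ℕ} (hy1 : 1 ≤ y) (hy2 : y ≤ m) :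
    walkWeight wF (cpath n m P x y) = (Bc n m P x y 0 : ℤ) := by
  unfold cpath
  rw [suf_cons n m P (Nat.zero_le _), walkWeight_cons_cons, wF_rv,
    ← suf_cons n m P (Nat.zero_le _),
    weight_suf n m P hy1 hy2 (K m) 0 (by omega) (Nat.zero_le _)]
  ring

lemma rv_mem_Vall (n m : ℕ) (P : ℕ → ℕ → ℤ) {x : ℕ} (hx1 : 1 ≤ x) (hx2 : x ≤ n) :
    rv x ∈ Vall n m P := by
  unfold Vall
  exact Finset.mem_union_left _ (Finset.mem_union_left _
    (Finset.mem_image.mpr ⟨x, by simp [hx1, hx2], rfl⟩))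

lemma cv_mem_Vall (n m : ℕ) (P : ℕ → ℕ → ℤ) {y : ℕ} (hy1 : 1 ≤ y) (hy2 : y ≤ m) :
    cv y ∈ Vall n m P := by
  unfold Vall
  exact Finset.mem_union_left _ (Finset.mem_union_right _
    (Finset.mem_image.mpr ⟨y, by simp [hy1, hy2], rfl⟩))

end Emu

theorem substochastic_emulator :
    ∃ C : ℝ, 0 < C ∧
      ∀ (n m : ℕ) (P : ℕ → ℕ → ℤ), RightSubstochastic n m P →
        ∃ (H : WDigraph) (r c : ℕ → ℕ),
          IsDAG H ∧
          (∀ e ∈ H.E, 0 ≤ H.w e) ∧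
          ((H.size : ℝ) ≤ C * ((n : ℝ) + (m : ℝ)) * (Real.logb 2 ((n : ℝ) + (m : ℝ)) + 1)) ∧
          (∀ x, 1 ≤ x → x ≤ n → r x ∈ H.V) ∧
          (∀ y, 1 ≤ y → y ≤ m → c y ∈ H.V) ∧
          (∀ x x', 1 ≤ x → x ≤ n → 1 ≤ x' → x' ≤ n → r x = r x' → x = x') ∧
          (∀ y y', 1 ≤ y → y ≤ m → 1 ≤ y' → y' ≤ m → c y = c y' → y = y') ∧
          (∀ x y, 1 ≤ x → x ≤ n → 1 ≤ y → y ≤ m → r x ≠ c y) ∧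
          (∀ x y, 1 ≤ x → x ≤ n → 1 ≤ y → y ≤ m →
            ∃ l, IsPathFromTo H l (r x) (c y) ∧
              walkWeight H.w l = ∑ i ∈ Finset.Icc x n, ∑ j ∈ Finset.Icc y m, P i j ∧
              ∀ l', IsPathFromTo H l' (r x) (c y) → l' = l) := by
  refine ⟨34, by norm_num, ?_⟩
  intro n m P hP
  rcases Nat.eq_zero_or_pos m with hm0 | hm
  · -- degenerate case m = 0
    subst hm0
    refine ⟨⟨Emu.Vr n, ∅, Emu.wF,
      fun e he => absurd he (Finset.notMem_empty _),
      fun e he => absurd he (Finset.notMem_empty _)⟩, Emu.rv, Emu.cv,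
      ?_, ?_, ?_, ?_, ?_, ?_, ?_, ?_, ?_⟩
    · rintro ⟨v, l, hlen, ⟨⟨hne, hmem, hchain⟩, hhead, hlast⟩⟩
      match l, hlen with
      | a :: b :: l2, _ =>
        exact absurd (List.isChain_cons_cons.mp hchain).1 (Finset.notMem_empty _)
    · intro e he; exact absurd he (Finset.notMem_empty _)
    · show (((Emu.Vr n).card + (∅ : Finset (ℕ × ℕ)).card : ℕ) : ℝ) ≤ _
      have h1 : (Emu.Vr n).card + (∅ : Finset (ℕ × ℕ)).card ≤ n := by
        rw [Finset.card_empty]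
        calc (Emu.Vr n).card + 0 = (Emu.Vr n).card := by omega
          _ ≤ (Finset.Icc 1 n).card := Finset.card_image_le
          _ ≤ n := by rw [Nat.card_Icc]; omega
      have h2 : (((Emu.Vr n).card + (∅ : Finset (ℕ × ℕ)).card : ℕ) : ℝ) ≤ (n : ℝ) := by
        exact_mod_cast h1
      have h3 : (0:ℝ) ≤ Real.logb 2 ((n : ℝ) + (0:ℕ)) := by
        rcases Nat.eq_zero_or_pos n with h | h
        · subst h; simp
        · apply Real.logb_nonneg (by norm_num)
          push_cast
          have : (1:ℝ) ≤ (n:ℝ) := by exact_mod_cast h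
          linarith
      have h4 : (0:ℝ) ≤ (n:ℝ) := Nat.cast_nonneg n
      push_cast at h2 h3 ⊢
      nlinarith
    · intro x hx1 hx2
      exact Finset.mem_image.mpr ⟨x, by simp [hx1, hx2], rfl⟩
    · intro y hy1 hy2; omega
    · intro x x' _ _ _ _ h
      unfold Emu.rv at h; omega
    · intro y y' hy1 hy2 _ _ _; omega
    · intro x y _ _ hy1 hy2; omega
    · intro x y _ _ hy1 hy2; omega
  · -- main case m ≥ 1
    refine ⟨Emu.Hgr n m P, Emu.rv, Emu.cv, Emu.hgr_dag n m P, Emu.wF_nonneg n m P,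
      ?_, ?_, ?_, ?_, ?_, ?_, ?_⟩
    · -- size bound
      have h1 : (Emu.Hgr n m P).size ≤ (n + m) * (4 * Emu.K m + 30) :=
        Emu.size_bound_nat n m P hm
      have hK : Emu.K m ≤ Nat.log 2 (n + m) + 1 := by
        calc Emu.K m ≤ Nat.log 2 m + 1 := Emu.K_le_log m
          _ ≤ Nat.log 2 (n + m) + 1 := by
              have := Nat.log_mono_right (b := 2) (show m ≤ n + m by omega)
              omega
      have h2 : (Emu.Hgr n m P).size ≤ (n + m) * (34 * (Nat.log 2 (n + m) + 1)) := by
        calc (Emu.Hgr n m P).size ≤ (n + m) * (4 * Emu.K m + 30) := h1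
          _ ≤ (n + m) * (34 * (Nat.log 2 (n + m) + 1)) := by
              apply Nat.mul_le_mul_left
              omega
      have h3 : ((Emu.Hgr n m P).size : ℝ) ≤ ((n:ℝ) + m) * (34 * ((Nat.log 2 (n + m) : ℝ) + 1)) := by
        calc ((Emu.Hgr n m P).size : ℝ)
            ≤ (((n + m) * (34 * (Nat.log 2 (n + m) + 1)) : ℕ) : ℝ) := by exact_mod_cast h2
          _ = ((n:ℝ) + m) * (34 * ((Nat.log 2 (n + m) : ℝ) + 1)) := by push_cast; ring
      have h4 : ((Nat.log 2 (n + m) : ℝ)) ≤ Real.logb 2 ((n:ℝ) + m) := by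
        have h := Real.natLog_le_logb (n + m) 2
        push_cast at h
        exact h
      have h5 : (0:ℝ) ≤ (n:ℝ) + m := by positivity
      nlinarith
    · intro x hx1 hx2
      exact Emu.rv_mem_Vall n m P hx1 hx2
    · intro y hy1 hy2
      exact Emu.cv_mem_Vall n m P hy1 hy2
    · intro x x' _ _ _ _ h
      unfold Emu.rv at h; omega
    · intro y y' _ _ _ _ h
      unfold Emu.cv at h; omega
    · intro x y _ _ _ _ h
      have h1 := Emu.rv_mod x
      have h2 := Emu.cv_mod y
      omega
    · intro x y hx1 hx2 hy1 hy2
      refine ⟨Emu.cpath n m P x y, Emu.cpath_is_path n m P hx1 hx2 hy1 hy2, ?_, ?_⟩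
      · show walkWeight Emu.wF _ = _
        rw [Emu.weight_cpath n m P hy1 hy2,
          Emu.Bc_eq_sum n m P hP hx1 hy1 hy2]
      · exact Emu.unique_cpath n m P hx1 hx2 hy1 hy2
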